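/- Let w : ℝ → ℝ be continuous and integrable, and set u(x) = −∫_x^∞ w(y) dy. Let δ > 0, C > 0, and let Φ̃ : ℝ × ([−δ,δ]∖{0}) → M₂(ℂ) be such that: (a) ‖Φ̃(x,k)‖ ≤ C for all x and k; (b) for each k, y ↦ Φ̃(y,k) is measurable; and (c) for all x ∈ ℝ and all real k with 0 < |k| ≤ δ, Φ̃(x,k) = I + i k ∫_x^∞ w(y)·e^{i k (y−x) σ3}·σ1·Φ̃(y,k)·e^{−i k (y−x) σ3} dy, where σ1 = [[0,1],[1,0]] and σ3 = [[1,0],[0,−1]]. Then for every x ∈ ℝ, lim_{k→0, k real, k≠0} (Φ̃(x,k) − I)/k = −i·u(x)·σ1. -/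

import Mathlib

open Matrix MeasureTheory

/-- The diagonal exponential `e^{iθσ3} = diag(e^{iθ}, e^{−iθ})`. -/
noncomputable def expDiag (θ : ℂ) : Matrix (Fin 2) (Fin 2) ℂ :=
  !![Complex.exp (Complex.I * θ), 0; 0, Complex.exp (-(Complex.I * θ))]

set_option maxHeartbeats 1000000

lemma conjProd (θ : ℂ) (M : Matrix (Fin 2) (Fin 2) ℂ) :
    expDiag θ * !![(0:ℂ), 1; 1, 0] * M * expDiag (-θ) =
    !![M 1 0, Complex.exp (2 * Complex.I * θ) * M 1 1;
       Complex.exp (-(2 * Complex.I * θ)) * M 0 0, M 0 1] := by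
  ext i j
  fin_cases i <;> fin_cases j <;>
    simp [expDiag, Matrix.mul_apply, Matrix.vecMul, dotProduct, Fin.sum_univ_two,
      ← Complex.exp_add, mul_comm, mul_assoc, mul_left_comm] <;> ring_nf <;>
    simp [sq, ← Complex.exp_add, two_mul] <;> ring_nf

lemma norm_exp_I_real (c θ : ℝ) : ‖Complex.exp ((c : ℂ) * Complex.I * (θ : ℂ))‖ = 1 := by
  rw [Complex.norm_exp]
  simp [Complex.mul_re, Complex.mul_im]

lemma conjProd_norm_le {C : ℝ} (θ : ℝ) (M : Matrix (Fin 2) (Fin 2) ℂ)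
    (hM : ∀ i j, ‖M i j‖ ≤ C) (i j : Fin 2) :
    ‖(expDiag (θ : ℂ) * !![(0:ℂ), 1; 1, 0] * M * expDiag (-(θ : ℂ))) i j‖ ≤ C := by
  rw [conjProd]
  have h2 : ‖Complex.exp (2 * Complex.I * (θ:ℂ))‖ = 1 := norm_exp_I_real 2 θ
  have h2' : ‖Complex.exp (-(2 * Complex.I * (θ:ℂ)))‖ = 1 := by
    have := norm_exp_I_real (-2) θ
    rw [show ((-2:ℝ):ℂ) * Complex.I * (θ:ℂ) = -(2 * Complex.I * (θ:ℂ)) by push_cast; ring] at this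
    exact this
  fin_cases i <;> fin_cases j <;> simp [norm_mul, h2, h2'] <;> apply hM

/-- Small-`k` expansion of the Jost solutions of the `k → 0` normalized Lax pair of the
short pulse equation: if `Φ̃(x,k)` is bounded, measurable in `x`, and satisfies
`Φ̃(x,k) = I + ik∫_x^∞ w(y)·e^{ik(y−x)σ3}·σ1·Φ̃(y,k)·e^{−ik(y−x)σ3} dy`
for real `0 < |k| ≤ δ`, then `(Φ̃(x,k) − I)/k → −i·u(x)·σ1` as `k → 0`, where
`u(x) = −∫_x^∞ w(y) dy`. -/
theorem jost_small_k_expansion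
    (w : ℝ → ℝ) (hw_cont : Continuous w) (hw_int : Integrable w)
    (u : ℝ → ℝ) (hu : ∀ x, u x = -∫ y in Set.Ioi x, w y)
    (δ C : ℝ) (hδ : 0 < δ) (hC : 0 < C)
    (Φ : ℝ → ℝ → Matrix (Fin 2) (Fin 2) ℂ)
    (hbound : ∀ (x k : ℝ), k ≠ 0 → |k| ≤ δ → ∀ i j, ‖Φ x k i j‖ ≤ C)
    (hmeas : ∀ (k : ℝ) (i j : Fin 2), Measurable fun y => Φ y k i j)
    (hinteq : ∀ (x k : ℝ), k ≠ 0 → |k| ≤ δ → ∀ i j,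
      Φ x k i j = (1 : Matrix (Fin 2) (Fin 2) ℂ) i j
        + Complex.I * (k : ℂ) * ∫ y in Set.Ioi x,
            (w y : ℂ) * ((expDiag ((k * (y - x) : ℝ) : ℂ) * !![0, 1; 1, 0] * Φ y k
              * expDiag (-((k * (y - x) : ℝ) : ℂ)) : Matrix (Fin 2) (Fin 2) ℂ) i j))
    (x : ℝ) :
    Filter.Tendsto (fun k : ℝ => k⁻¹ • (Φ x k - 1))
      (nhdsWithin 0 {0}ᶜ)
      (nhds ((-(Complex.I * (u x : ℂ))) • !![(0 : ℂ), 1; 1, 0])) := by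
  set L := nhdsWithin (0:ℝ) {(0:ℝ)}ᶜ with hL
  set W : ℝ := ∫ y, |w y| with hWdef
  have hld : L ≤ nhds (0:ℝ) := nhdsWithin_le_nhds
  have habs : Integrable (fun y => |w y|) := hw_int.abs
  have hCW : Integrable (fun y => C * |w y|) := habs.const_mul C
  -- eventually k ≠ 0 and |k| ≤ δ
  have hev : ∀ᶠ k in L, k ≠ 0 ∧ |k| ≤ δ := by
    have h1 : ∀ᶠ k in L, k ≠ 0 := by
      have : {(0:ℝ)}ᶜ ∈ L := self_mem_nhdsWithin
      filter_upwards [this] with k hk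
      simpa using hk
    have h2 : ∀ᶠ k in L, |k| ≤ δ := by
      have : Metric.closedBall (0:ℝ) δ ∈ nhds (0:ℝ) := Metric.closedBall_mem_nhds 0 hδ
      have := nhdsWithin_le_nhds (s := {(0:ℝ)}ᶜ) this
      filter_upwards [this] with k hk
      simpa [Real.dist_eq] using hk
    exact h1.and h2
  -- pointwise norm bound on the integrand
  have hIbound : ∀ (y k : ℝ), k ≠ 0 → |k| ≤ δ → ∀ z i j,
      ‖(w z : ℂ) * ((expDiag ((k * (z - y) : ℝ) : ℂ) * !![0, 1; 1, 0] * Φ z k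
        * expDiag (-((k * (z - y) : ℝ) : ℂ)) : Matrix (Fin 2) (Fin 2) ℂ) i j)‖ ≤ C * |w z| := by
    intro y k hk hkδ z i j
    rw [norm_mul, Complex.norm_real, Real.norm_eq_abs, mul_comm]
    have := conjProd_norm_le (C := C) (k * (z - y)) (Φ z k) (hbound z k hk hkδ) i j
    exact mul_le_mul_of_nonneg_right this (abs_nonneg _)
  -- the key closeness bound ‖Φ y k i j - 1 i j‖ ≤ |k| * (C * W)
  have key : ∀ (y k : ℝ), k ≠ 0 → |k| ≤ δ → ∀ a b,
      ‖Φ y k a b - (1 : Matrix (Fin 2) (Fin 2) ℂ) a b‖ ≤ |k| * (C * W) := by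
    intro y k hk hkδ a b
    rw [hinteq y k hk hkδ a b, add_sub_cancel_left, mul_assoc, norm_mul, norm_mul]
    have hInorm : ‖Complex.I‖ = 1 := Complex.norm_I
    rw [hInorm, one_mul, Complex.norm_real, Real.norm_eq_abs]
    have hle : ‖∫ z in Set.Ioi y, (w z : ℂ) * ((expDiag ((k * (z - y) : ℝ) : ℂ) * !![0, 1; 1, 0]
        * Φ z k * expDiag (-((k * (z - y) : ℝ) : ℂ)) : Matrix (Fin 2) (Fin 2) ℂ) a b)‖ ≤ C * W := by
      calc ‖_‖ ≤ ∫ z in Set.Ioi y, C * |w z| :=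
            norm_integral_le_of_norm_le hCW.restrict
              (Filter.Eventually.of_forall fun z => hIbound y k hk hkδ z a b)
        _ ≤ ∫ z, C * |w z| :=
            setIntegral_le_integral hCW
              (Filter.Eventually.of_forall fun z => by positivity)
        _ = C * W := by rw [hWdef, integral_const_mul]
    exact mul_le_mul_of_nonneg_left hle (abs_nonneg _)
  -- pointwise limit of Φ entries
  have hΦlim : ∀ (y : ℝ) (a b : Fin 2),
      Filter.Tendsto (fun k => Φ y k a b) L (nhds ((1 : Matrix (Fin 2) (Fin 2) ℂ) a b)) := by
    intro y a b
    have h0 : Filter.Tendsto (fun k : ℝ => |k| * (C * W)) L (nhds 0) := by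
      have : Filter.Tendsto (fun k : ℝ => |k| * (C * W)) (nhds 0) (nhds (|(0:ℝ)| * (C * W))) :=
        (continuous_abs.tendsto 0).mul_const _
      simpa using this.mono_left hld
    have hsq : Filter.Tendsto (fun k => Φ y k a b - (1 : Matrix (Fin 2) (Fin 2) ℂ) a b)
        L (nhds 0) := by
      apply squeeze_zero_norm' (hev.mono fun k hk => key y k hk.1 hk.2 a b) h0
    have := hsq.add (tendsto_const_nhds (x := (1 : Matrix (Fin 2) (Fin 2) ℂ) a b))
    simpa using this
  -- entrywise reduction
  rw [show (nhds ((-(Complex.I * (u x : ℂ))) • !![(0 : ℂ), 1; 1, 0])) =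
    nhds ((-(Complex.I * (u x : ℂ))) • !![(0 : ℂ), 1; 1, 0]) from rfl]
  apply tendsto_pi_nhds.2
  intro i
  apply tendsto_pi_nhds.2
  intro j
  -- the limiting entry value
  have hval : ((-(Complex.I * (u x : ℂ))) • !![(0 : ℂ), 1; 1, 0]) i j
      = Complex.I * ∫ y in Set.Ioi x, (w y : ℂ) * (!![(0 : ℂ), 1; 1, 0] i j) := by
    rw [integral_mul_const]
    rw [show (∫ a in Set.Ioi x, ((w a : ℂ))) = (((∫ a in Set.Ioi x, w a : ℝ)) : ℂ) from
      integral_ofReal]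
    rw [Matrix.smul_apply, smul_eq_mul]
    rw [hu x]
    push_cast
    ring
  rw [hval]
  -- dominated convergence
  have hDC : Filter.Tendsto
      (fun k : ℝ => ∫ y in Set.Ioi x, (w y : ℂ) * ((expDiag ((k * (y - x) : ℝ) : ℂ)
          * !![0, 1; 1, 0] * Φ y k * expDiag (-((k * (y - x) : ℝ) : ℂ)) : Matrix (Fin 2) (Fin 2) ℂ) i j))
      L (nhds (∫ y in Set.Ioi x, (w y : ℂ) * (!![(0 : ℂ), 1; 1, 0] i j))) := by
    apply tendsto_integral_filter_of_dominated_convergence (fun y => C * |w y|)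
    · -- measurability
      apply Filter.Eventually.of_forall
      intro k
      apply Measurable.aestronglyMeasurable
      have hwm : Measurable fun y : ℝ => ((w y : ℂ)) :=
        Complex.measurable_ofReal.comp hw_cont.measurable
      apply hwm.mul
      have hrw : ∀ y : ℝ, ((expDiag ((k * (y - x) : ℝ) : ℂ) * !![0, 1; 1, 0] * Φ y k
          * expDiag (-((k * (y - x) : ℝ) : ℂ)) : Matrix (Fin 2) (Fin 2) ℂ) i j)
          = (!![Φ y k 1 0, Complex.exp (2 * Complex.I * ((k * (y - x) : ℝ) : ℂ)) * Φ y k 1 1;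
              Complex.exp (-(2 * Complex.I * ((k * (y - x) : ℝ) : ℂ))) * Φ y k 0 0,
              Φ y k 0 1] i j) := fun y => by rw [conjProd]
      simp only [hrw]
      have hexp : Measurable fun y : ℝ => Complex.exp (2 * Complex.I * ((k * (y - x) : ℝ) : ℂ)) := by
        apply Complex.continuous_exp.measurable.comp
        fun_prop
      have hexp' : Measurable fun y : ℝ =>
          Complex.exp (-(2 * Complex.I * ((k * (y - x) : ℝ) : ℂ))) := by
        apply Complex.continuous_exp.measurable.comp
        fun_prop
      fin_cases i <;> fin_cases j <;>
        simp only [Matrix.cons_val', Matrix.cons_val_zero, Matrix.cons_val_one,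
          Matrix.head_cons, Matrix.head_fin_const, Matrix.empty_val',
          Matrix.cons_val_fin_one]
      · exact hmeas k 1 0
      · exact hexp.mul (hmeas k 1 1)
      · exact hexp'.mul (hmeas k 0 0)
      · exact hmeas k 0 1
    · -- bound
      filter_upwards [hev] with k hk
      exact Filter.Eventually.of_forall fun z => hIbound x k hk.1 hk.2 z i j
    · exact hCW.restrict
    · -- pointwise limit
      apply Filter.Eventually.of_forall
      intro y
      apply Filter.Tendsto.const_mul
      have hrw : ∀ k : ℝ, ((expDiag ((k * (y - x) : ℝ) : ℂ) * !![0, 1; 1, 0] * Φ y k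
          * expDiag (-((k * (y - x) : ℝ) : ℂ)) : Matrix (Fin 2) (Fin 2) ℂ) i j)
          = (!![Φ y k 1 0, Complex.exp (2 * Complex.I * ((k * (y - x) : ℝ) : ℂ)) * Φ y k 1 1;
              Complex.exp (-(2 * Complex.I * ((k * (y - x) : ℝ) : ℂ))) * Φ y k 0 0,
              Φ y k 0 1] i j) := fun k => by rw [conjProd]
      simp only [hrw]
      have hexp : Filter.Tendsto (fun k : ℝ => Complex.exp (2 * Complex.I * ((k * (y - x) : ℝ) : ℂ)))
          L (nhds 1) := by
        have hc : Continuous fun k : ℝ => Complex.exp (2 * Complex.I * ((k * (y - x) : ℝ) : ℂ)) := by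
          apply Complex.continuous_exp.comp; fun_prop
        have := (hc.tendsto 0).mono_left hld
        simpa using this
      have hexp' : Filter.Tendsto
          (fun k : ℝ => Complex.exp (-(2 * Complex.I * ((k * (y - x) : ℝ) : ℂ))))
          L (nhds 1) := by
        have hc : Continuous fun k : ℝ =>
            Complex.exp (-(2 * Complex.I * ((k * (y - x) : ℝ) : ℂ))) := by
          apply Complex.continuous_exp.comp; fun_prop
        have := (hc.tendsto 0).mono_left hld
        simpa using this
      fin_cases i <;> fin_cases j <;>
        simp only [Matrix.cons_val', Matrix.cons_val_zero, Matrix.cons_val_one,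
          Matrix.head_cons, Matrix.head_fin_const, Matrix.empty_val',
          Matrix.cons_val_fin_one]
      · simpa using hΦlim y 1 0
      · simpa using (hexp.mul (hΦlim y 1 1))
      · simpa using (hexp'.mul (hΦlim y 0 0))
      · simpa using hΦlim y 0 1
  have hDC' := hDC.const_mul Complex.I
  apply hDC'.congr'
  filter_upwards [hev] with k hk
  have hkC : (k : ℂ) ≠ 0 := Complex.ofReal_ne_zero.2 hk.1
  have := hinteq x k hk.1 hk.2 i j
  rw [Matrix.smul_apply, Matrix.sub_apply, this]
  rw [Complex.real_smul]
  push_cast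
  field_simp
  ring
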